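/- Structure theorem for attractors: for every λ ∈ ℂ with |λ| = 1, the eigenspace of the random unitary operation Φ for λ equals the set of matrices intertwining all the unitaries up to the phase λ; that is, Φ(X) = λ·X holds if and only if U_i · X = λ · (X · U_i) for every i = 1, …, m. -/

import Mathlib

set_option maxHeartbeats 1000000


open Matrix BigOperators

lemma trace_ctm {d : ℕ} (A : Matrix (Fin d) (Fin d) ℂ) :
    (Aᴴ * A).trace = ((∑ j, ∑ k, Complex.normSq (A j k) : ℝ) : ℂ) := by
  simp only [Matrix.trace, Matrix.diag, Matrix.mul_apply, Matrix.conjTranspose_apply]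
  push_cast
  rw [Finset.sum_comm]
  refine Finset.sum_congr rfl fun j _ => Finset.sum_congr rfl fun k _ => ?_
  rw [Complex.star_def, Complex.normSq_eq_conj_mul_self]

theorem stmt_5 {d m : ℕ} (hd : 1 ≤ d)
    (U : Fin m → Matrix (Fin d) (Fin d) ℂ)
    (hU : ∀ i, U i ∈ Matrix.unitaryGroup (Fin d) ℂ)
    (p : Fin m → ℝ) (hp : ∀ i, 0 < p i) (hpsum : ∑ i, p i = 1)
    (Φ : Matrix (Fin d) (Fin d) ℂ → Matrix (Fin d) (Fin d) ℂ)
    (hΦ : ∀ ρ, Φ ρ = ∑ i, (p i : ℂ) • (U i * ρ * (U i)ᴴ))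
    (lam : ℂ) (hlam : ‖lam‖ = 1)
    (X : Matrix (Fin d) (Fin d) ℂ) :
    Φ X = lam • X ↔ ∀ i, U i * X = lam • (X * U i) := by
  have hpsumC : (∑ i, (p i : ℂ)) = 1 := by
    rw [← Complex.ofReal_sum, hpsum, Complex.ofReal_one]
  have hU1 : ∀ i, (U i)ᴴ * U i = 1 := by
    intro i
    have := (hU i).1
    rwa [Matrix.star_eq_conjTranspose] at this
  have hU2 : ∀ i, U i * (U i)ᴴ = 1 := by
    intro i
    have := (hU i).2
    rwa [Matrix.star_eq_conjTranspose] at this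
  have hlam2 : (starRingEnd ℂ) lam * lam = 1 := by
    rw [mul_comm, Complex.mul_conj]
    norm_cast
    rw [Complex.normSq_eq_norm_sq, hlam]; norm_num
  constructor
  · intro h
    set Y : Fin m → Matrix (Fin d) (Fin d) ℂ := fun i => U i * X * (U i)ᴴ with hYdef
    set Z : Fin m → Matrix (Fin d) (Fin d) ℂ := fun i => Y i - lam • X with hZdef
    have hsum : ∑ i, (p i : ℂ) • Y i = lam • X := by
      rw [hΦ] at h; exact h
    have hZsum : ∑ i, (p i : ℂ) • Z i = 0 := by
      simp only [hZdef, smul_sub, Finset.sum_sub_distrib, hsum, ← Finset.sum_smul, hpsumC,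
        one_smul, sub_self]
    -- key scalar identities
    have hT : ∀ i, ((Y i)ᴴ * Y i).trace = (Xᴴ * X).trace := by
      intro i
      have hm : (Y i)ᴴ * Y i = U i * (Xᴴ * (((U i)ᴴ * U i) * (X * (U i)ᴴ))) := by
        simp only [hYdef, Matrix.conjTranspose_mul, Matrix.conjTranspose_conjTranspose,
          Matrix.mul_assoc]
      rw [hU1, Matrix.one_mul] at hm
      rw [hm, Matrix.trace_mul_comm]
      simp only [Matrix.mul_assoc]
      rw [hU1, Matrix.mul_one]
    -- trace(Z iᴴ * Z i) = trace(Z iᴴ * Y i) - lam * trace(Z iᴴ * X)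
    have hS : ∑ i, (p i : ℂ) * ((Z i)ᴴ * Z i).trace = 0 := by
      have e1 : ∀ i, ((Z i)ᴴ * Z i).trace
          = ((Z i)ᴴ * Y i).trace - lam * ((Z i)ᴴ * X).trace := by
        intro i
        simp only [hZdef, Matrix.mul_sub, Matrix.mul_smul, Matrix.trace_sub, Matrix.trace_smul,
          smul_eq_mul]
      have e2 : ∀ i, ((Z i)ᴴ * Y i).trace
          = (Xᴴ * X).trace - (starRingEnd ℂ) lam * ((Xᴴ * Y i).trace) := by
        intro i
        simp only [hZdef, Matrix.conjTranspose_sub, Matrix.conjTranspose_smul,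
          Matrix.sub_mul, Matrix.smul_mul, Matrix.trace_sub, Matrix.trace_smul, smul_eq_mul,
          hT i, Complex.star_def]
      have e3 : ∀ i, (Xᴴ * Y i).trace = (Xᴴ * Z i).trace + lam * (Xᴴ * X).trace := by
        intro i
        simp only [hZdef, Matrix.mul_sub, Matrix.mul_smul, Matrix.trace_sub, Matrix.trace_smul,
          smul_eq_mul]
        ring
      have e4 : ∀ i, ((Z i)ᴴ * Z i).trace
          = - (starRingEnd ℂ) lam * ((Xᴴ * Z i).trace) - lam * ((Z i)ᴴ * X).trace := by
        intro i
        rw [e1 i, e2 i, e3 i, mul_add, ← mul_assoc ((starRingEnd ℂ) lam) lam, hlam2, one_mul]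
        ring
      have s1 : ∑ i, (p i : ℂ) * ((Xᴴ * Z i).trace) = 0 := by
        have : ∑ i, (p i : ℂ) * ((Xᴴ * Z i).trace)
            = (Xᴴ * (∑ i, (p i : ℂ) • Z i)).trace := by
          rw [Matrix.mul_sum, Matrix.trace_sum]
          refine Finset.sum_congr rfl fun i _ => ?_
          rw [Matrix.mul_smul, Matrix.trace_smul, smul_eq_mul]
        rw [this, hZsum, Matrix.mul_zero, Matrix.trace_zero]
      have s2 : ∑ i, (p i : ℂ) * (((Z i)ᴴ * X).trace) = 0 := by
        have : ∑ i, (p i : ℂ) * (((Z i)ᴴ * X).trace)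
            = ((∑ i, (p i : ℂ) • Z i)ᴴ * X).trace := by
          rw [Matrix.conjTranspose_sum, Matrix.sum_mul, Matrix.trace_sum]
          refine Finset.sum_congr rfl fun i _ => ?_
          rw [Matrix.conjTranspose_smul, Matrix.smul_mul, Matrix.trace_smul, smul_eq_mul]
          simp
        rw [this, hZsum, Matrix.conjTranspose_zero, Matrix.zero_mul, Matrix.trace_zero]
      calc ∑ i, (p i : ℂ) * ((Z i)ᴴ * Z i).trace
          = ∑ i, ((- (starRingEnd ℂ) lam) * ((p i : ℂ) * ((Xᴴ * Z i).trace))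
              - lam * ((p i : ℂ) * (((Z i)ᴴ * X).trace))) := by
            refine Finset.sum_congr rfl fun i _ => ?_
            rw [e4 i]; ring
        _ = (- (starRingEnd ℂ) lam) * (∑ i, (p i : ℂ) * ((Xᴴ * Z i).trace))
              - lam * (∑ i, (p i : ℂ) * (((Z i)ᴴ * X).trace)) := by
            rw [Finset.sum_sub_distrib, ← Finset.mul_sum, ← Finset.mul_sum]
        _ = 0 := by rw [s1, s2]; ring
    -- now deduce each Z i = 0
    have hZ0 : ∀ i, Z i = 0 := by
      have hre : ∑ i, p i * (∑ j, ∑ k, Complex.normSq (Z i j k)) = 0 := by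
        have : ((∑ i, p i * (∑ j, ∑ k, Complex.normSq (Z i j k)) : ℝ) : ℂ) = 0 := by
          push_cast
          rw [← hS]
          refine Finset.sum_congr rfl fun i _ => ?_
          rw [trace_ctm]
          push_cast
          ring
        exact_mod_cast this
      have hterm : ∀ i ∈ Finset.univ, (0:ℝ) ≤ p i * (∑ j, ∑ k, Complex.normSq (Z i j k)) := by
        intro i _
        apply mul_nonneg (hp i).le
        apply Finset.sum_nonneg; intro j _
        apply Finset.sum_nonneg; intro k _
        exact Complex.normSq_nonneg _
      intro i
      have h0 := (Finset.sum_eq_zero_iff_of_nonneg hterm).mp hre i (Finset.mem_univ i)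
      have hn : (∑ j, ∑ k, Complex.normSq (Z i j k)) = 0 := by
        rcases mul_eq_zero.mp h0 with h | h
        · exact absurd h (ne_of_gt (hp i))
        · exact h
      have hnn : ∀ j ∈ (Finset.univ : Finset (Fin d)), (0:ℝ) ≤ ∑ k, Complex.normSq (Z i j k) :=
        fun j _ => Finset.sum_nonneg fun k _ => Complex.normSq_nonneg _
      ext j k
      have hj := (Finset.sum_eq_zero_iff_of_nonneg hnn).mp hn j (Finset.mem_univ j)
      have hk := (Finset.sum_eq_zero_iff_of_nonneg
        (fun k _ => Complex.normSq_nonneg (Z i j k))).mp hj k (Finset.mem_univ k)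
      simpa using Complex.normSq_eq_zero.mp hk
    intro i
    have hYi : U i * X * (U i)ᴴ = lam • X := by
      have := hZ0 i
      rw [hZdef] at this
      have := sub_eq_zero.mp this
      exact this
    calc U i * X = (U i * X * (U i)ᴴ) * U i := by
          rw [Matrix.mul_assoc (U i * X), hU1, Matrix.mul_one]
      _ = lam • (X * U i) := by rw [hYi, Matrix.smul_mul]
  · intro h
    rw [hΦ]
    have key : ∀ i, U i * X * (U i)ᴴ = lam • X := by
      intro i
      calc U i * X * (U i)ᴴ = (lam • (X * U i)) * (U i)ᴴ := by rw [h i]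
        _ = lam • (X * (U i * (U i)ᴴ)) := by rw [Matrix.smul_mul, Matrix.mul_assoc]
        _ = lam • X := by rw [hU2, Matrix.mul_one]
    simp only [key, smul_smul]
    rw [← Finset.sum_smul]
    congr 1
    rw [← Finset.sum_mul, hpsumC, one_mul]
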